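/- Let M be a DFA with n states accepting L. If v ∈ L has |v| > n and there exists u ∉ L with u a factor of v, and v is a shortest such word, then u is a suffix of v. -/

import Mathlib

theorem long_minimal_factor_witness_is_suffix {α σ : Type*} [Fintype σ] (M : DFA α σ)
    (n : ℕ) (hn : Fintype.card σ = n) (v u : List α)
    (hv : v ∈ M.accepts) (hlen : n < v.length)
    (hu : u ∉ M.accepts) (hfac : u <:+: v)
    (hmin : ∀ v' ∈ M.accepts, (∃ u' : List α, u' ∉ M.accepts ∧ u' <:+: v') →
      v.length ≤ v'.length) :
    u <:+ v := by
  obtain ⟨x, y, rfl⟩ := hfac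
  rcases eq_or_ne y [] with rfl | hy
  · exact ⟨x, by simp⟩
  exfalso
  have hylen : 1 ≤ y.length := List.length_pos_iff.mpr hy
  -- the word without its last letter
  have hyu : u ++ y ≠ [] := fun h => hy (List.append_eq_nil_iff.mp h).2
  have hdrop_eq : (x ++ u ++ y).dropLast = x ++ u ++ y.dropLast := by
    rw [List.append_assoc, List.dropLast_append_of_ne_nil hyu,
      List.dropLast_append_of_ne_nil hy, ← List.append_assoc]
  have hdrop_len : (x ++ u ++ y).dropLast.length < (x ++ u ++ y).length := by
    rw [List.length_dropLast]
    simp only [List.length_append]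
    omega
  -- v.dropLast is not accepted, by minimality
  have hdrop_not : (x ++ u ++ y).dropLast ∉ M.accepts := by
    intro hmem
    have := hmin _ hmem ⟨u, hu, x, y.dropLast, by rw [hdrop_eq]⟩
    omega
  -- pump down
  obtain ⟨q, a, b, c, hsplit, hablen, hb, ha, hq, hc⟩ :=
    M.evalFrom_split (s := M.start) (t := M.eval (x ++ u ++ y))
      (by simp only [List.length_append] at hlen ⊢; omega) rfl
  have hlens : x.length + u.length + y.length = a.length + b.length + c.length := by
    have := congrArg List.length hsplit
    simp only [List.length_append] at this
    omega
  simp only [List.length_append] at hlen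
  have hbpos : 1 ≤ b.length := List.length_pos_iff.mpr hb
  have hcne : c ≠ [] := by
    intro h
    subst h
    simp only [List.length_nil, add_zero] at hlens
    omega
  -- a ++ c is accepted
  have hac : a ++ c ∈ M.accepts := by
    rw [DFA.mem_accepts]
    show M.evalFrom M.start (a ++ c) ∈ M.accept
    rw [DFA.evalFrom_of_append, ha, hc]
    exact hv
  -- a ++ c.dropLast is rejected
  have hdrop_split : (x ++ u ++ y).dropLast = a ++ b ++ c.dropLast := by
    rw [hsplit, List.dropLast_append_of_ne_nil hcne]
  have hacd : a ++ c.dropLast ∉ M.accepts := by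
    intro hmem
    apply hdrop_not
    rw [DFA.mem_accepts] at hmem ⊢
    have h1 : M.eval ((x ++ u ++ y).dropLast) = M.evalFrom q c.dropLast := by
      show M.evalFrom M.start _ = _
      rw [hdrop_split, List.append_assoc, DFA.evalFrom_of_append, ha,
        DFA.evalFrom_of_append, hq]
    have h2 : M.eval (a ++ c.dropLast) = M.evalFrom q c.dropLast := by
      show M.evalFrom M.start _ = _
      rw [DFA.evalFrom_of_append, ha]
    rw [h1, ← h2]
    exact hmem
  -- a ++ c.dropLast is a factor of a ++ c
  obtain ⟨d, hd⟩ := List.dropLast_prefix c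
  have hinf : (a ++ c.dropLast) <:+: (a ++ c) :=
    ⟨[], d, by rw [List.nil_append, List.append_assoc, hd]⟩
  have := hmin _ hac ⟨a ++ c.dropLast, hacd, hinf⟩
  simp only [List.length_append] at this
  omega
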